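/- When the generator voltage magnitude is held at the limit |V_g| = V_+ > 0, the transferred power P_t = P_n − P_l is an affine function of the net powers: P_t = ((X² − R²)·P_n − 2RX·Q_n)/|Z|² − R·(V_t² − V_+²)/|Z|². -/

import Mathlib

/-- Two-bus power-flow model with the generator voltage magnitude held at the limit
`|V_g| = V₊ > 0`. The transferred power `P_t = P_n − P_l` is an affine function of the
net powers: `P_t = ((X² − R²)·P_n − 2RX·Q_n)/|Z|² − R·(V_t² − V₊²)/|Z|²`. -/
theorem transferred_power_affine_on_voltage_limit
    (R X Vt Vplus : ℝ) (hR : 0 < R) (hX : 0 < X) (hVt : 0 < Vt) (hVplus : 0 < Vplus)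
    (Vg : ℂ) (hVg : ‖Vg‖ = Vplus) :
    let Z : ℂ := ⟨R, X⟩
    let Icur : ℂ := (Vg - (Vt : ℂ)) / Z
    let Sn : ℂ := Vg * (starRingEnd ℂ) Icur
    let Pn : ℝ := Sn.re
    let Qn : ℝ := Sn.im
    let Pl : ℝ := R * ‖Icur‖ ^ 2
    let Pt : ℝ := Pn - Pl
    let Zm : ℝ := ‖Z‖
    Pt = ((X ^ 2 - R ^ 2) * Pn - 2 * R * X * Qn) / Zm ^ 2
          - R * (Vt ^ 2 - Vplus ^ 2) / Zm ^ 2 := by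
  obtain ⟨a, b⟩ := Vg
  have hZ : (0:ℝ) < R^2 + X^2 := by positivity
  have hab : a^2 + b^2 = Vplus^2 := by
    have h := Complex.sq_norm ⟨a, b⟩
    rw [hVg] at h
    simpa [Complex.normSq_mk, sq] using h.symm
  simp only [Complex.sq_norm, Complex.normSq_mk, Complex.div_re, Complex.div_im,
    Complex.sub_re, Complex.sub_im, Complex.mul_re, Complex.mul_im, Complex.ofReal_re,
    Complex.ofReal_im, Complex.normSq_div, Complex.normSq_sub, map_sub,
    Complex.conj_re, Complex.conj_im, Complex.normSq_ofReal]
  rw [← hab]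
  field_simp
  ring
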